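/- Let (C, n) be a finite-dimensional composition algebra over a field k of characteristic not two. Then there exists an element e ∈ C with n(e) = 1 such that H := C_{(R_e)⁻¹, (L_e)⁻¹} is a unital algebra with unit e·e (where L_e, R_e are left and right multiplication by e in C), H with the form n is a composition algebra, and C = H_{f,g} with f = R_e, g = L_e, where f and g are isometries of n. -/

import Mathlib

/-- Kaplansky's trick: every finite-dimensional composition algebra `(C, n)`
has an element `e` with `n e = 1` such that with `f = R_e`, `g = L_e` (which
are isometries of `n`), the isotope `H = C_{f⁻¹, g⁻¹}` is a unital composition
algebra with unit `e·e`, and `C = H_{f,g}`. -/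
theorem stmt3 {k C : Type*} [Field k] (hchar : (2 : k) ≠ 0)
    [AddCommGroup C] [Module k C] [FiniteDimensional k C] [Nontrivial C]
    (n : QuadraticForm k C)
    (hnd : ∀ x : C, (∀ y : C, QuadraticMap.polar n x y = 0) → x = 0)
    (mul : C →ₗ[k] C →ₗ[k] C)
    (hcomp : ∀ x y : C, n (mul x y) = n x * n y) :
    ∃ (e : C) (f g : C ≃ₗ[k] C),
      n e = 1 ∧
      (∀ x : C, f x = mul x e) ∧ (∀ x : C, g x = mul e x) ∧
      -- H := C_{f⁻¹,g⁻¹} is unital with unit e·e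
      (∀ x : C, mul (f.symm x) (g.symm (mul e e)) = x) ∧
      (∀ x : C, mul (f.symm (mul e e)) (g.symm x) = x) ∧
      -- (H, n) is a composition algebra
      (∀ x y : C, n (mul (f.symm x) (g.symm y)) = n x * n y) ∧
      -- f and g are isometries of n
      (∀ x : C, n (f x) = n x) ∧ (∀ x : C, n (g x) = n x) ∧
      -- C = H_{f,g}
      (∀ x y : C, mul x y = mul (f.symm (f x)) (g.symm (g y))) := by
  -- find c with n c ≠ 0
  obtain ⟨c, hc⟩ : ∃ c : C, n c ≠ 0 := by
    by_contra h
    push_neg at h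
    have hall : ∀ x : C, x = 0 := fun x => hnd x fun y => by
      simp [QuadraticMap.polar, h]
    obtain ⟨a, b, hab⟩ := exists_pair_ne C
    exact hab ((hall a).trans (hall b).symm)
  set e : C := (n c)⁻¹ • mul c c with he
  have hne : n e = 1 := by
    rw [he, QuadraticMap.map_smul, hcomp, smul_eq_mul]
    field_simp
  have polarR : ∀ x z y : C, QuadraticMap.polar n (mul x y) (mul z y)
      = QuadraticMap.polar n x z * n y := by
    intro x z y
    simp only [QuadraticMap.polar]
    rw [show mul x y + mul z y = mul (x + z) y by rw [map_add]; rfl,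
      hcomp, hcomp, hcomp]
    ring
  have polarL : ∀ x z y : C, QuadraticMap.polar n (mul y x) (mul y z)
      = QuadraticMap.polar n x z * n y := by
    intro x z y
    simp only [QuadraticMap.polar]
    rw [show mul y x + mul y z = mul y (x + z) by rw [map_add],
      hcomp, hcomp, hcomp]
    ring
  have hfinj : Function.Injective (mul.flip e) := by
    rw [injective_iff_map_eq_zero]
    intro x hx
    apply hnd
    intro z
    have h1 := polarR x z e
    have hx' : mul x e = 0 := hx
    rw [hx', hne, mul_one, QuadraticMap.polar_zero_left] at h1
    exact h1.symm
  have hginj : Function.Injective (mul e) := by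
    rw [injective_iff_map_eq_zero]
    intro x hx
    apply hnd
    intro z
    have h1 := polarL x z e
    rw [hx, hne, mul_one, QuadraticMap.polar_zero_left] at h1
    exact h1.symm
  let f : C ≃ₗ[k] C :=
    LinearEquiv.ofBijective (mul.flip e)
      ⟨hfinj, (LinearMap.injective_iff_surjective).mp hfinj⟩
  let g : C ≃ₗ[k] C :=
    LinearEquiv.ofBijective (mul e)
      ⟨hginj, (LinearMap.injective_iff_surjective).mp hginj⟩
  have hf : ∀ x : C, f x = mul x e := fun _ => rfl
  have hg : ∀ x : C, g x = mul e x := fun _ => rfl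
  have hfiso : ∀ x : C, n (f x) = n x := by
    intro x; rw [hf, hcomp, hne, mul_one]
  have hgiso : ∀ x : C, n (g x) = n x := by
    intro x; rw [hg, hcomp, hne, one_mul]
  have hfsymm : ∀ x : C, n (f.symm x) = n x := fun x => by
    conv_rhs => rw [← f.apply_symm_apply x]
    rw [hfiso]
  have hgsymm : ∀ x : C, n (g.symm x) = n x := fun x => by
    conv_rhs => rw [← g.apply_symm_apply x]
    rw [hgiso]
  have hgee : g.symm (mul e e) = e := by
    rw [show mul e e = g e from (hg e).symm, g.symm_apply_apply]
  have hfee : f.symm (mul e e) = e := by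
    rw [show mul e e = f e from (hf e).symm, f.symm_apply_apply]
  refine ⟨e, f, g, hne, hf, hg, ?_, ?_, ?_, hfiso, hgiso, ?_⟩
  · intro x
    rw [hgee, show mul (f.symm x) e = f (f.symm x) from (hf _).symm,
      f.apply_symm_apply]
  · intro x
    rw [hfee, show mul e (g.symm x) = g (g.symm x) from (hg _).symm,
      g.apply_symm_apply]
  · intro x y
    rw [hcomp, hfsymm, hgsymm]
  · intro x y
    rw [f.symm_apply_apply, g.symm_apply_apply]
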